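/- Let γ: (K,0) → (K²,0) be the plane curve γ(t) = (t³, t⁴). If ω is a 1-form on K² along the deformation γ_s(t) = (t³+st, t⁴) satisfying ω(dγ_s ∘ ∂t) = 0 for all (t,s) near (0,0), then ω must have the form ω_{(s,t)} = α(t,s)·(4t³ dX − (3t²+s) dY) for some smooth/analytic function α. In particular, the deformation γ_s does not lift to an integral deformation at s = 0 (the kernel direction degenerates). -/

import Mathlib

open MvPowerSeries Finsupp

theorem stmt0 (ω₁ ω₂ : MvPowerSeries (Fin 2) ℂ)
    (h : ω₁ * (3 * (X 0) ^ 2 + X 1) + ω₂ * (4 * (X 0) ^ 3) = 0) :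
    (∃ α : MvPowerSeries (Fin 2) ℂ,
        ω₁ = α * (4 * (X 0) ^ 3) ∧ ω₂ = -(α * (3 * (X 0) ^ 2 + X 1)))
    ∧ constantCoeff ω₁ = 0 ∧ constantCoeff ω₂ = 0 := by
  classical
  have e1 : (3 : MvPowerSeries (Fin 2) ℂ) * X 0 ^ 2 = monomial (single 0 2) 3 := by
    rw [X_pow_eq]; ext m; simp [coeff_monomial, coeff_C_mul, ← map_ofNat ((C : ℂ →+* MvPowerSeries (Fin 2) ℂ)) 3]
  have e2 : (X 1 : MvPowerSeries (Fin 2) ℂ) = monomial (single 1 1) 1 := by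
    rw [← X_pow_eq, pow_one]
  have e3 : (4 : MvPowerSeries (Fin 2) ℂ) * X 0 ^ 3 = monomial (single 0 3) 4 := by
    rw [X_pow_eq]; ext m; simp [coeff_monomial, coeff_C_mul, ← map_ofNat ((C : ℂ →+* MvPowerSeries (Fin 2) ℂ)) 4]
  have key : ∀ n : Fin 2 →₀ ℕ,
      (if single 0 2 ≤ n then coeff (n - single 0 2) ω₁ * 3 else 0)
      + (if single 1 1 ≤ n then coeff (n - single 1 1) ω₁ * 1 else 0)
      + (if single 0 3 ≤ n then coeff (n - single 0 3) ω₂ * 4 else 0) = 0 := by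
    intro n
    have h' := h
    rw [e1, e2, e3, mul_add] at h'
    have := congrArg (coeff n) h'
    rwa [map_add, map_add, coeff_mul_monomial, coeff_mul_monomial, coeff_mul_monomial,
      map_zero] at this
  have step : ∀ m : Fin 2 →₀ ℕ, m 0 < 2 → coeff m ω₁ = 0 := by
    intro m hm
    have k := key (m + single 1 1)
    rw [if_neg, if_pos, if_neg, add_tsub_cancel_right] at k
    · simpa using k
    · rw [single_le_iff]; simp; omega
    · rw [single_le_iff]; simp
    · rw [single_le_iff]; simp; omega
  have hA : ∀ m : Fin 2 →₀ ℕ, m 0 < 3 → coeff m ω₁ = 0 := by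
    intro m hm
    rcases lt_or_ge (m 0) 2 with h2 | h2
    · exact step m h2
    have hm0 : m 0 = 2 := by omega
    have k := key (m + single 1 1)
    rw [if_pos, if_pos, if_neg, add_tsub_cancel_right] at k
    · have hz : coeff (m + single 1 1 - single 0 2) ω₁ = 0 := by
        apply step
        simp [tsub_apply]
        omega
      rw [hz] at k
      simpa using k
    · rw [single_le_iff]; simp; omega
    · rw [single_le_iff]; simp
    · rw [single_le_iff]; simp; omega
  set α : MvPowerSeries (Fin 2) ℂ := fun m => coeff (m + single 0 3) ω₁ / 4 with hα
  have hcα : ∀ m : Fin 2 →₀ ℕ, coeff m α = coeff (m + single 0 3) ω₁ / 4 := fun m => rfl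
  have hw1 : ω₁ = α * (4 * (X 0) ^ 3) := by
    ext n
    rw [e3, coeff_mul_monomial]
    split_ifs with hn
    · rw [hcα, tsub_add_cancel_of_le hn]
      ring
    · rw [single_le_iff] at hn
      exact hA n (by omega)
  have hw2 : ω₂ = -(α * (3 * (X 0) ^ 2 + X 1)) := by
    ext n
    rw [map_neg, e1, e2, mul_add, map_add, coeff_mul_monomial, coeff_mul_monomial]
    have t1 : (if single 0 2 ≤ n then coeff (n - single 0 2) α * 3 else 0)
        = coeff (n + single 0 1) ω₁ * 3 / 4 := by
      split_ifs with hc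
      · rw [single_le_iff] at hc
        rw [hcα]
        have : n - single 0 2 + single 0 3 = n + single 0 1 := by
          ext i
          fin_cases i <;> simp [tsub_apply] <;> omega
        rw [this]; ring
      · rw [single_le_iff] at hc
        rw [hA (n + single 0 1) (by simp; omega)]
        ring
    have t2 : (if single 1 1 ≤ n then coeff (n - single 1 1) α * 1 else 0)
        = (if single 1 1 ≤ n + single 0 3 then coeff (n + single 0 3 - single 1 1) ω₁ * 1 else 0) / 4 := by
      have hcond : (single 1 1 ≤ n + single 0 3) ↔ (single 1 1 ≤ n) := by
        rw [single_le_iff, single_le_iff]; simp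
      split_ifs with hc hc' hc'
      · rw [hcα]
        have : n - single 1 1 + single 0 3 = n + single 0 3 - single 1 1 := by
          rw [single_le_iff] at hc
          ext i
          fin_cases i <;> simp [tsub_apply] <;> omega
        rw [this]; ring
      · exact absurd (hcond.mpr hc) hc'
      · exact absurd (hcond.mp hc') hc
      · simp
    have c1 : single 0 2 ≤ n + single 0 3 := by rw [single_le_iff]; simp
    have c3 : single 0 3 ≤ n + single 0 3 := by rw [single_le_iff]; simp
    have e4 : n + single 0 3 - single 0 2 = n + single 0 1 := by
      ext i
      fin_cases i <;> simp [tsub_apply]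
    have k := key (n + single 0 3)
    rw [if_pos c1, if_pos c3, add_tsub_cancel_right, e4] at k
    rw [t1, t2]
    linear_combination (1/4 : ℂ) * k
  refine ⟨⟨α, hw1, hw2⟩, ?_, ?_⟩
  · rw [hw1]; simp [e3, ← coeff_zero_eq_constantCoeff, coeff_mul_monomial, single_le_iff]
  · rw [hw2]
    simp [e1, e2, mul_add, ← coeff_zero_eq_constantCoeff, coeff_mul_monomial, single_le_iff]
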